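/- arXiv:2602.16522 — 2 statements merged into one kernel-verified Lean document; each statement's English description precedes it below -/
import Mathlib

section
/- Let μ : ℤ → ℝ≥0 be a probability mass function with finite support defining a random walk on ℤ absorbed at values ≤ 0, with μ(0) < 1 and expected increment Σ_x x·μ(x) < 0. Then from every starting value the walk is absorbed with probability 1 and the expected number of steps until absorption is finite. -/
/-- `probWithin μ Sup n y` is the probability that the random walk with step
distribution `μ` (with support contained in the finite set `Sup`), started at `y`
and absorbed at values `≤ 0`, reaches a value `≤ 0` within `n` steps. -/
noncomputable def probWithin (μ : ℤ → ℝ) (Sup : Finset ℤ) : ℕ → ℤ → ℝ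
  | 0, y => if y ≤ 0 then 1 else 0
  | n + 1, y => if y ≤ 0 then 1 else ∑ x ∈ Sup, μ x * probWithin μ Sup n (y + x)

/-- The probability that the random walk started at `x₀` ever reaches a value `≤ 0`. -/
noncomputable def termProb (μ : ℤ → ℝ) (Sup : Finset ℤ) (x₀ : ℤ) : ℝ :=
  ⨆ n : ℕ, probWithin μ Sup n x₀

section Aux

variable (μ : ℤ → ℝ) (Sup : Finset ℤ)

lemma pw_nonneg (hnn : ∀ x : ℤ, 0 ≤ μ x) :
    ∀ (n : ℕ) (y : ℤ), 0 ≤ probWithin μ Sup n y := by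
  intro n
  induction n with
  | zero =>
      intro y
      simp only [probWithin]
      split <;> norm_num
  | succ n ih =>
      intro y
      simp only [probWithin]
      split
      · norm_num
      · exact Finset.sum_nonneg fun x _ => mul_nonneg (hnn x) (ih _)

lemma pw_le_one (hnn : ∀ x : ℤ, 0 ≤ μ x) (hsum : ∑ x ∈ Sup, μ x = 1) :
    ∀ (n : ℕ) (y : ℤ), probWithin μ Sup n y ≤ 1 := by
  intro n
  induction n with
  | zero =>
      intro y
      simp only [probWithin]
      split <;> norm_num
  | succ n ih =>
      intro y
      simp only [probWithin]
      split
      · norm_num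
      · calc ∑ x ∈ Sup, μ x * probWithin μ Sup n (y + x)
            ≤ ∑ x ∈ Sup, μ x * 1 :=
              Finset.sum_le_sum fun x _ =>
                mul_le_mul_of_nonneg_left (ih _) (hnn x)
          _ = 1 := by simp [hsum]

lemma pw_mono (hnn : ∀ x : ℤ, 0 ≤ μ x) :
    ∀ (n : ℕ) (y : ℤ), probWithin μ Sup n y ≤ probWithin μ Sup (n + 1) y := by
  intro n
  induction n with
  | zero =>
      intro y
      simp only [probWithin]
      split
      · norm_num
      · apply Finset.sum_nonneg
        intro x _
        apply mul_nonneg (hnn x)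
        split <;> norm_num
  | succ n ih =>
      intro y
      simp only [probWithin]
      split
      · norm_num
      · exact Finset.sum_le_sum fun x _ =>
          mul_le_mul_of_nonneg_left (ih _) (hnn x)

lemma pw_bound (hnn : ∀ x : ℤ, 0 ≤ μ x) (hsum : ∑ x ∈ Sup, μ x = 1)
    (θ ρ : ℝ) (hθ : 0 < θ) (hρ0 : 0 ≤ ρ)
    (hρ : ∑ x ∈ Sup, μ x * Real.exp (θ * x) ≤ ρ) :
    ∀ (n : ℕ) (y : ℤ), 1 - probWithin μ Sup n y ≤ ρ ^ n * Real.exp (θ * y) := by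
  intro n
  induction n with
  | zero =>
      intro y
      simp only [probWithin, pow_zero, one_mul]
      split
      · simp [Real.exp_nonneg]
      · rename_i hy
        have hy1 : (1 : ℤ) ≤ y := by omega
        have : (0 : ℝ) ≤ θ * y := by
          apply mul_nonneg hθ.le
          exact_mod_cast (by omega : (0 : ℤ) ≤ y)
        linarith [Real.one_le_exp this]
  | succ n ih =>
      intro y
      simp only [probWithin]
      split
      · have := Real.exp_nonneg (θ * y)
        have : (0:ℝ) ≤ ρ ^ (n+1) * Real.exp (θ * y) :=
          mul_nonneg (pow_nonneg hρ0 _) (Real.exp_nonneg _)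
        linarith
      · calc 1 - ∑ x ∈ Sup, μ x * probWithin μ Sup n (y + x)
            = ∑ x ∈ Sup, μ x * (1 - probWithin μ Sup n (y + x)) := by
              rw [Finset.sum_congr rfl
                  (fun x _ => by ring :
                    ∀ x ∈ Sup, μ x * (1 - probWithin μ Sup n (y + x))
                      = μ x - μ x * probWithin μ Sup n (y + x))]
              rw [Finset.sum_sub_distrib, hsum]
          _ ≤ ∑ x ∈ Sup, μ x * (ρ ^ n * Real.exp (θ * ((y + x : ℤ) : ℝ))) :=
              Finset.sum_le_sum fun x _ =>
                mul_le_mul_of_nonneg_left (ih _) (hnn x)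
          _ = (ρ ^ n * Real.exp (θ * y)) * ∑ x ∈ Sup, μ x * Real.exp (θ * x) := by
              rw [Finset.mul_sum]
              apply Finset.sum_congr rfl
              intro x _
              push_cast
              rw [mul_add, Real.exp_add]
              ring
          _ ≤ (ρ ^ n * Real.exp (θ * y)) * ρ := by
              apply mul_le_mul_of_nonneg_left hρ
              exact mul_nonneg (pow_nonneg hρ0 _) (Real.exp_nonneg _)
          _ = ρ ^ (n + 1) * Real.exp (θ * y) := by ring

lemma exists_theta (hnn : ∀ x : ℤ, 0 ≤ μ x) (hsum : ∑ x ∈ Sup, μ x = 1)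
    (hE : ∑ x ∈ Sup, (x : ℝ) * μ x < 0) :
    ∃ θ : ℝ, 0 < θ ∧ ∑ x ∈ Sup, μ x * Real.exp (θ * x) < 1 := by
  set f : ℝ → ℝ := fun θ => ∑ x ∈ Sup, μ x * Real.exp (θ * x) with hf
  set D : ℝ := ∑ x ∈ Sup, μ x * x with hD
  have hDneg : D < 0 := by
    rw [hD]
    calc ∑ x ∈ Sup, μ x * (x : ℝ) = ∑ x ∈ Sup, (x : ℝ) * μ x := by
          apply Finset.sum_congr rfl; intro x _; ring
      _ < 0 := hE
  have hderiv : HasDerivAt f D 0 := by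
    rw [hD]
    apply HasDerivAt.fun_sum
    intro x _
    have h1 : HasDerivAt (fun θ : ℝ => θ * (x : ℝ)) (x : ℝ) 0 := by
      simpa using (hasDerivAt_id (0 : ℝ)).mul_const (x : ℝ)
    have h2 : HasDerivAt (fun θ : ℝ => Real.exp (θ * (x : ℝ)))
        (Real.exp (0 * (x : ℝ)) * (x : ℝ)) 0 := h1.exp
    have h3 := h2.const_mul (μ x)
    simpa using h3
  have hf0 : f 0 = 1 := by
    simp only [hf, zero_mul, Real.exp_zero, mul_one]
    exact hsum
  have hslope := hasDerivAt_iff_tendsto_slope.mp hderiv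
  have hmem : {z : ℝ | slope f 0 z < 0} ∈ nhdsWithin (0 : ℝ) {(0:ℝ)}ᶜ :=
    hslope (Iio_mem_nhds hDneg)
  have hmem' : {z : ℝ | slope f 0 z < 0} ∈ nhdsWithin (0 : ℝ) (Set.Ioi 0) :=
    nhdsWithin_mono 0 (fun x hx => ne_of_gt hx) hmem
  have hpos : Set.Ioi (0:ℝ) ∈ nhdsWithin (0 : ℝ) (Set.Ioi 0) := self_mem_nhdsWithin
  obtain ⟨θ, hθ1, hθ2⟩ := Filter.nonempty_of_mem (Filter.inter_mem hmem' hpos)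
  refine ⟨θ, hθ2, ?_⟩
  have hθpos : (0:ℝ) < θ := hθ2
  have : (f θ - f 0) / (θ - 0) < 0 := by
    have h : slope f 0 θ < 0 := hθ1
    rwa [slope_def_field] at h
  rw [hf0, sub_zero] at this
  have := (div_neg_iff.mp this)
  rcases this with ⟨h1, h2⟩ | ⟨h1, h2⟩
  · linarith
  · linarith

end Aux

/-- If `μ 0 < 1` and the expected increment is negative, then from every starting value
the walk is absorbed with probability `1` and the expected number of steps until
absorption (which equals `∑ₙ P(T > n) = ∑ₙ (1 - probWithin μ Sup n x₀)`) is finite. -/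
theorem negative_drift_walk_past (μ : ℤ → ℝ) (Sup : Finset ℤ)
    (hnn : ∀ x : ℤ, 0 ≤ μ x) (hsupp : ∀ x ∉ Sup, μ x = 0)
    (hsum : ∑ x ∈ Sup, μ x = 1) (h0 : μ 0 < 1)
    (hE : ∑ x ∈ Sup, (x : ℝ) * μ x < 0) :
    (∀ x₀ : ℤ, termProb μ Sup x₀ = 1) ∧
    (∀ x₀ : ℤ, Summable (fun n : ℕ => 1 - probWithin μ Sup n x₀)) := by
  obtain ⟨θ, hθ, hφ⟩ := exists_theta μ Sup hnn hsum hE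
  set ρ : ℝ := ∑ x ∈ Sup, μ x * Real.exp (θ * x) with hρdef
  have hρ0 : 0 ≤ ρ :=
    Finset.sum_nonneg fun x _ => mul_nonneg (hnn x) (Real.exp_nonneg _)
  have hρ1 : ρ < 1 := hφ
  have hbound := pw_bound μ Sup hnn hsum θ ρ hθ hρ0 le_rfl
  have key : ∀ x₀ : ℤ, ∀ n : ℕ,
      1 - probWithin μ Sup n x₀ ≤ ρ ^ n * Real.exp (θ * x₀) := fun x₀ n => hbound n x₀
  constructor
  · intro x₀
    have hb : BddAbove (Set.range fun n => probWithin μ Sup n x₀) := by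
      refine ⟨1, ?_⟩
      rintro _ ⟨n, rfl⟩
      exact pw_le_one μ Sup hnn hsum n x₀
    have hmono : Monotone fun n => probWithin μ Sup n x₀ :=
      monotone_nat_of_le_succ fun n => pw_mono μ Sup hnn n x₀
    have htend : Filter.Tendsto (fun n => probWithin μ Sup n x₀)
        Filter.atTop (nhds (termProb μ Sup x₀)) :=
      tendsto_atTop_ciSup hmono hb
    have hgeo : Filter.Tendsto (fun n : ℕ => ρ ^ n * Real.exp (θ * x₀))
        Filter.atTop (nhds 0) := by
      rw [show (0:ℝ) = 0 * Real.exp (θ * x₀) by ring]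
      exact (tendsto_pow_atTop_nhds_zero_of_lt_one hρ0 hρ1).mul_const _
    have hlow : Filter.Tendsto (fun n : ℕ => 1 - ρ ^ n * Real.exp (θ * x₀))
        Filter.atTop (nhds 1) := by
      have := (tendsto_const_nhds (x := (1:ℝ)) (f := Filter.atTop (α := ℕ))).sub hgeo
      simpa using this
    have htend1 : Filter.Tendsto (fun n => probWithin μ Sup n x₀)
        Filter.atTop (nhds 1) := by
      apply tendsto_of_tendsto_of_tendsto_of_le_of_le hlow tendsto_const_nhds
      · intro n
        show 1 - ρ ^ n * Real.exp (θ * x₀) ≤ probWithin μ Sup n x₀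
        linarith [key x₀ n]
      · intro n
        show probWithin μ Sup n x₀ ≤ 1
        exact pw_le_one μ Sup hnn hsum n x₀
    exact tendsto_nhds_unique htend htend1
  · intro x₀
    apply Summable.of_nonneg_of_le
    · intro n
      have := pw_le_one μ Sup hnn hsum n x₀
      linarith
    · exact key x₀
    · exact (summable_geometric_of_lt_one hρ0 hρ1).mul_right _
end

section
/- Let t and s be first-order terms with t not a variable. Define maxNO(t,s) as the maximum cardinality of a set S of positions of s such that t matches s at every position in S and all distinct positions in S are non-overlapping w.r.t. t. Then maxNO satisfies the recursion: for s = f(s₁,...,s_k), maxNO(t,s) equals max(β, Σ_{π ∈ Pos_V(t)} maxNO(t, s|_π) + 1) if t matches s at the root, and β otherwise, where β = Σ_{j=1}^{k} maxNO(t, s_j). -/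
inductive Tm (S V : Type) : Type
  | var : V → Tm S V
  | app : S → List (Tm S V) → Tm S V

namespace Tm
variable {S V : Type}

def subst (σ : V → Tm S V) : Tm S V → Tm S V
  | var x => σ x
  | app f ts => app f (ts.attach.map fun u => subst σ u.1)
decreasing_by
  have := List.sizeOf_lt_of_mem u.2
  simp only [Tm.app.sizeOf_spec]
  omega

inductive Occurs (x : V) : Tm S V → Prop
  | var : Occurs x (var x)
  | app {f : S} {ts : List (Tm S V)} {t : Tm S V} :
      t ∈ ts → Occurs x t → Occurs x (app f ts)

def iter (σ : V → Tm S V) (n : ℕ) (t : Tm S V) : Tm S V :=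
  (subst σ)^[n] t

/-- The subterm of `t` at position `π`, if `π` is a position of `t`. -/
def subtermAt : Tm S V → List ℕ → Option (Tm S V)
  | t, [] => some t
  | var _, _ :: _ => none
  | app _ [], _ :: _ => none
  | app _ (u :: _), 0 :: π => subtermAt u π
  | app f (_ :: ts), (i + 1) :: π => subtermAt (app f ts) (i :: π)

/-- `t` matches `s` at position `π`. -/
def Matches (t s : Tm S V) (π : List ℕ) : Prop :=
  ∃ σ : V → Tm S V, subtermAt s π = some (subst σ t)

/-- `π` is a non-variable (function symbol) position of `t`. -/
def IsAppPos (t : Tm S V) (π : List ℕ) : Prop :=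
  ∃ (f : S) (ts : List (Tm S V)), subtermAt t π = some (app f ts)

/-- `π₁` and `π₂` are overlapping w.r.t. `t`. -/
def Overlap (t : Tm S V) (π₁ π₂ : List ℕ) : Prop :=
  ∃ τ, IsAppPos t τ ∧ (π₁ = π₂ ++ τ ∨ π₂ = π₁ ++ τ)

/-- `Sset` is a set of pairwise non-overlapping occurrences of `t` in `s`. -/
def NOSet (t s : Tm S V) (Sset : Finset (List ℕ)) : Prop :=
  (∀ π ∈ Sset, Matches t s π) ∧
  (∀ π₁ ∈ Sset, ∀ π₂ ∈ Sset, π₁ ≠ π₂ → ¬ Overlap t π₁ π₂)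

/-- Maximal number of pairwise non-overlapping occurrences of `t` in `s`. -/
noncomputable def maxNO (t s : Tm S V) : ℕ :=
  sSup {n | ∃ Sset : Finset (List ℕ), NOSet t s Sset ∧ Sset.card = n}


/-- The list of variable positions of a term. -/
def varPositions : Tm S V → List (List ℕ)
  | var _ => [[]]
  | app _ [] => []
  | app f (u :: ts) =>
      (varPositions u).map (0 :: ·) ++
      (varPositions (app f ts)).map
        (fun π => match π with | i :: π' => (i + 1) :: π' | [] => [])

end Tm

namespace Tm
variable {S V : Type}

lemma subst_app (σ : V → Tm S V) (f : S) (ts : List (Tm S V)) :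
    subst σ (app f ts) = app f (ts.map (subst σ)) := by
  rw [subst]
  simp [List.attach_map_val]

lemma subtermAt_append (s : Tm S V) (π τ : List ℕ) :
    subtermAt s (π ++ τ) = (subtermAt s π).bind (fun u => subtermAt u τ) := by
  induction s, π using subtermAt.induct with
  | case1 => simp [subtermAt]
  | case2 => simp [subtermAt]
  | case3 => simp [subtermAt]
  | case4 f u ts π ih => simpa [subtermAt] using ih
  | case5 f u ts i π ih => simpa [subtermAt] using ih

lemma subtermAt_cons (f : S) (ss : List (Tm S V)) (j : ℕ) (τ : List ℕ) :
    subtermAt (app f ss) (j :: τ) = (ss[j]?).bind (fun u => subtermAt u τ) := by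
  induction ss generalizing j with
  | nil => simp [subtermAt]
  | cons u ts ih =>
    cases j with
    | zero => simp [subtermAt]
    | succ i => simpa [subtermAt] using ih i

lemma subtermAt_subst {σ : V → Tm S V} {t u : Tm S V} {π : List ℕ}
    (h : subtermAt t π = some u) :
    subtermAt (subst σ t) π = some (subst σ u) := by
  induction t, π using subtermAt.induct with
  | case1 t => simp [subtermAt] at h ⊢; exact congrArg _ h
  | case2 => simp [subtermAt] at h
  | case3 => simp [subtermAt] at h
  | case4 f u' ts π ih =>
    simp only [subtermAt] at h
    rw [subst_app]
    simp only [List.map_cons, subtermAt]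
    exact ih h
  | case5 f u' ts i π ih =>
    simp only [subtermAt] at h
    rw [subst_app]
    simp only [List.map_cons, subtermAt]
    have := ih h
    rwa [subst_app] at this

lemma mem_varPositions_aux (t : Tm S V) :
    ∀ π : List ℕ, (π ∈ varPositions t ↔ ∃ x, subtermAt t π = some (var x)) := by
  induction t using varPositions.induct with
  | case1 x =>
    intro π
    cases π with
    | nil => simp [varPositions, subtermAt]
    | cons a l => simp [varPositions, subtermAt]
  | case2 f =>
    intro π
    cases π with
    | nil => simp [varPositions, subtermAt]
    | cons a l => simp [varPositions, subtermAt]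
  | case3 f u ts ih1 ih2 =>
    intro π
    cases π with
    | nil =>
      simp only [varPositions, List.mem_append, List.mem_map, subtermAt]
      constructor
      · rintro (⟨ρ, _, h⟩ | ⟨ρ, hρ, h⟩)
        · simp at h
        · have : ρ = [] := by
            cases ρ with
            | nil => rfl
            | cons i ρ' => simp at h
          subst this
          rw [ih2 []] at hρ
          obtain ⟨x, hx⟩ := hρ
          simp [subtermAt] at hx
      · rintro ⟨x, hx⟩
        simp at hx
    | cons a l =>
      cases a with
      | zero =>
        simp only [varPositions, List.mem_append, List.mem_map, subtermAt]
        rw [← ih1 l]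
        constructor
        · rintro (⟨ρ, hρ, h⟩ | ⟨ρ, hρ, h⟩)
          · simp at h; rwa [h] at hρ
          · exfalso
            cases ρ with
            | nil => simp at h
            | cons i ρ' => simp at h
        · intro hmem
          exact Or.inl ⟨l, hmem, rfl⟩
      | succ i =>
        simp only [varPositions, List.mem_append, List.mem_map, subtermAt]
        rw [← ih2 (i :: l)]
        constructor
        · rintro (⟨ρ, hρ, h⟩ | ⟨ρ, hρ, h⟩)
          · simp at h
          · cases ρ with
            | nil => simp at h
            | cons j ρ' =>
              simp only [List.cons.injEq] at h
              obtain ⟨h1, h2⟩ := h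
              have : j = i := by omega
              rw [this, h2] at hρ
              exact hρ
        · intro hmem
          exact Or.inr ⟨i :: l, hmem, rfl⟩

lemma mem_varPositions {t : Tm S V} {π : List ℕ} :
    π ∈ varPositions t ↔ ∃ x, subtermAt t π = some (var x) :=
  mem_varPositions_aux t π

lemma nodup_varPositions (t : Tm S V) : (varPositions t).Nodup := by
  induction t using varPositions.induct with
  | case1 x => simp [varPositions]
  | case2 f => simp [varPositions]
  | case3 f u ts ih1 ih2 =>
    have hne : ∀ ρ ∈ varPositions (app f ts), ρ ≠ [] := by
      intro ρ hρ h
      subst h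
      rw [mem_varPositions] at hρ
      obtain ⟨x, hx⟩ := hρ
      simp [subtermAt] at hx
    rw [varPositions]
    apply List.Nodup.append
    · exact ih1.map (fun a b h => by simpa using h)
    · apply List.Nodup.map_on _ ih2
      intro ρ1 h1 ρ2 h2 heq
      cases ρ1 with
      | nil => exact absurd rfl (hne _ h1)
      | cons i1 l1 =>
        cases ρ2 with
        | nil => exact absurd rfl (hne _ h2)
        | cons i2 l2 =>
          simp only [List.cons.injEq] at heq
          obtain ⟨e1, e2⟩ := heq
          simp [e2, Nat.succ_injective e1]
    · intro π h1 h2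
      simp only [List.mem_map] at h1 h2
      obtain ⟨ρ1, _, e1⟩ := h1
      obtain ⟨ρ2, hρ2, e2⟩ := h2
      cases ρ2 with
      | nil => exact absurd rfl (hne _ hρ2)
      | cons i2 l2 => rw [← e1] at e2; simp at e2

lemma classify (σ : V → Tm S V) (t : Tm S V) :
    ∀ (π : List ℕ) (u : Tm S V), subtermAt (subst σ t) π = some u →
      IsAppPos t π ∨ ∃ π_v τ, π = π_v ++ τ ∧ ∃ x, subtermAt t π_v = some (var x) := by
  induction t using varPositions.induct with
  | case1 x =>
    intro π u h
    exact Or.inr ⟨[], π, rfl, x, by simp [subtermAt]⟩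
  | case2 f =>
    intro π u h
    rw [subst_app] at h
    cases π with
    | nil => exact Or.inl ⟨f, [], by simp [subtermAt]⟩
    | cons a l => simp [subtermAt] at h
  | case3 f u0 ts ih1 ih2 =>
    intro π u h
    cases π with
    | nil => exact Or.inl ⟨f, u0 :: ts, by simp [subtermAt]⟩
    | cons a l =>
      cases a with
      | zero =>
        rw [subst_app] at h
        simp only [List.map_cons, subtermAt] at h
        rcases ih1 l u h with hap | ⟨π_v, τ, he, x, hx⟩
        · obtain ⟨g, us, hg⟩ := hap
          exact Or.inl ⟨g, us, by simpa [subtermAt] using hg⟩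
        · exact Or.inr ⟨0 :: π_v, τ, by simp [he], x, by simpa [subtermAt] using hx⟩
      | succ i =>
        rw [subst_app] at h
        simp only [List.map_cons, subtermAt] at h
        rw [← subst_app] at h
        rcases ih2 (i :: l) u h with hap | ⟨π_v, τ, he, x, hx⟩
        · obtain ⟨g, us, hg⟩ := hap
          exact Or.inl ⟨g, us, by simpa [subtermAt] using hg⟩
        · cases π_v with
          | nil => simp [subtermAt] at hx
          | cons j ρ =>
            simp only [List.cons_append, List.cons.injEq] at he
            obtain ⟨hji, hl⟩ := he
            subst hji
            exact Or.inr ⟨(i + 1) :: ρ, τ, by simp [hl], x,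
              by simpa [subtermAt] using hx⟩

def posList : Tm S V → List (List ℕ)
  | var _ => [[]]
  | app _ [] => [[]]
  | app f (u :: ts) =>
      [] :: ((posList u).map (0 :: ·) ++
        ((posList (app f ts)).filterMap fun π => match π with
          | [] => none
          | i :: π' => some ((i + 1) :: π')))

lemma mem_posList {s : Tm S V} : ∀ {π : List ℕ}, (subtermAt s π).isSome → π ∈ posList s := by
  induction s using posList.induct with
  | case1 x =>
    intro π h
    cases π with
    | nil => simp [posList]
    | cons a l => simp [subtermAt] at h
  | case2 f =>
    intro π h
    cases π with
    | nil => simp [posList]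
    | cons a l => simp [subtermAt] at h
  | case3 f u0 ts ih1 ih2 =>
    intro π h
    cases π with
    | nil => simp [posList]
    | cons a l =>
      cases a with
      | zero =>
        simp only [subtermAt] at h
        simp only [posList, List.mem_cons, List.mem_append, List.mem_map]
        exact Or.inr (Or.inl ⟨l, ih1 h, rfl⟩)
      | succ i =>
        simp only [subtermAt] at h
        simp only [posList, List.mem_cons, List.mem_append, List.mem_filterMap]
        exact Or.inr (Or.inr ⟨i :: l, ih2 h, rfl⟩)

lemma noset_card_le {t s : Tm S V} {A : Finset (List ℕ)} (h : NOSet t s A) :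
    A.card ≤ (posList s).toFinset.card := by
  apply Finset.card_le_card
  intro π hπ
  obtain ⟨σ, hσ⟩ := h.1 π hπ
  simp only [List.mem_toFinset]
  exact mem_posList (by rw [hσ]; rfl)

lemma maxNO_spec (t s : Tm S V) :
    (∃ Sset, NOSet t s Sset ∧ Sset.card = maxNO t s) ∧
      (∀ A : Finset (List ℕ), NOSet t s A → A.card ≤ maxNO t s) := by
  have hbdd : BddAbove {n | ∃ Sset : Finset (List ℕ), NOSet t s Sset ∧ Sset.card = n} := by
    refine ⟨(posList s).toFinset.card, ?_⟩
    rintro n ⟨A, hA, rfl⟩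
    exact noset_card_le hA
  have hne : (0 : ℕ) ∈ {n | ∃ Sset : Finset (List ℕ), NOSet t s Sset ∧ Sset.card = n} :=
    ⟨∅, ⟨by simp, by simp⟩, by simp⟩
  constructor
  · exact Nat.sSup_mem ⟨0, hne⟩ hbdd
  · intro A hA
    exact le_csSup hbdd ⟨A, hA, rfl⟩

lemma varpos_append {t : Tm S V} {ρ : List ℕ} {x : V} (hx : subtermAt t ρ = some (var x))
    (τ : List ℕ) : subtermAt t (ρ ++ τ) = (subtermAt (var x : Tm S V) τ) := by
  rw [subtermAt_append, hx]; rfl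

lemma not_isAppPos_of_varpos {t : Tm S V} {ρ : List ℕ} {x : V}
    (hx : subtermAt t ρ = some (var x)) (τ : List ℕ) : ¬ IsAppPos t (ρ ++ τ) := by
  rintro ⟨g, us, hg⟩
  rw [varpos_append hx] at hg
  cases τ with
  | nil => simp [subtermAt] at hg
  | cons a l => simp [subtermAt] at hg

lemma varpos_incomp {t : Tm S V} {ρ₁ ρ₂ : List ℕ} {x y : V}
    (h1 : subtermAt t ρ₁ = some (var x)) (h2 : subtermAt t ρ₂ = some (var y))
    (hp : ρ₁ <+: ρ₂) : ρ₁ = ρ₂ := by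
  obtain ⟨τ, rfl⟩ := hp
  rw [varpos_append h1] at h2
  cases τ with
  | nil => simp
  | cons a l => simp [subtermAt] at h2

lemma overlap_shift {t : Tm S V} (ρ τ₁ τ₂ : List ℕ) :
    Overlap t (ρ ++ τ₁) (ρ ++ τ₂) ↔ Overlap t τ₁ τ₂ := by
  constructor
  · rintro ⟨μ, hμ, h | h⟩
    · rw [List.append_assoc] at h
      exact ⟨μ, hμ, Or.inl (List.append_cancel_left h)⟩
    · rw [List.append_assoc] at h
      exact ⟨μ, hμ, Or.inr (List.append_cancel_left h)⟩
  · rintro ⟨μ, hμ, h | h⟩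
    · exact ⟨μ, hμ, Or.inl (by rw [h, List.append_assoc])⟩
    · exact ⟨μ, hμ, Or.inr (by rw [h, List.append_assoc])⟩

lemma card_classes {α β : Type*} [DecidableEq α] (l : List β) (hnd : l.Nodup)
    (P : β → α → Prop) [∀ b a, Decidable (P b a)] :
    ∀ A : Finset α, (∀ x ∈ A, ∃ b ∈ l, P b x) →
      (∀ x ∈ A, ∀ b₁ ∈ l, ∀ b₂ ∈ l, P b₁ x → P b₂ x → b₁ = b₂) →
      A.card = (l.map fun b => (A.filter (fun x => P b x)).card).sum := by
  induction l with
  | nil =>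
    intro A hex _
    have : A = ∅ := by
      apply Finset.eq_empty_of_forall_notMem
      intro x hx
      obtain ⟨b, hb, _⟩ := hex x hx
      simp at hb
    simp [this]
  | cons b l ih =>
    intro A hex huniq
    simp only [List.nodup_cons] at hnd
    have key : ∀ c ∈ l, A.filter (fun x => P c x) =
        (A.filter (fun x => ¬ P b x)).filter (fun x => P c x) := by
      intro c hc
      ext x
      simp only [Finset.mem_filter, and_assoc]
      constructor
      · rintro ⟨hxA, hPc⟩
        refine ⟨hxA, ?_, hPc⟩
        intro hPb
        exact hnd.1 (huniq x hxA b (by simp) c (by simp [hc]) hPb hPc ▸ hc)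
      · rintro ⟨hxA, _, hPc⟩
        exact ⟨hxA, hPc⟩
    have hrec := ih hnd.2 (A.filter (fun x => ¬ P b x))
      (by
        intro x hx
        rw [Finset.mem_filter] at hx
        obtain ⟨c, hc, hPc⟩ := hex x hx.1
        rcases List.mem_cons.1 hc with rfl | hc'
        · exact absurd hPc hx.2
        · exact ⟨c, hc', hPc⟩)
      (by
        intro x hx b₁ h₁ b₂ h₂ hp1 hp2
        rw [Finset.mem_filter] at hx
        exact huniq x hx.1 b₁ (by simp [h₁]) b₂ (by simp [h₂]) hp1 hp2)
    rw [List.map_cons, List.sum_cons]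
    rw [← Finset.card_filter_add_card_filter_not (s := A) (p := fun x => P b x)]
    congr 1
    rw [hrec]
    congr 1
    apply List.map_congr_left
    intro c hc
    rw [key c hc]

lemma range_list_sum (n : ℕ) (h : ℕ → ℕ) :
    ((List.range n).map h).sum = ∑ j ∈ Finset.range n, h j := by
  induction n with
  | zero => simp
  | succ n ih => simp [List.range_succ, Finset.sum_range_succ, ih]

lemma list_sum_map_eq {α : Type*} (l : List α) (g : α → ℕ) (d : α) :
    (l.map g).sum = ∑ j ∈ Finset.range l.length, g (l[j]?.getD d) := by
  rw [← range_list_sum]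
  induction l with
  | nil => simp
  | cons a l ih =>
    simp only [List.map_cons, List.sum_cons, List.length_cons, List.range_succ_eq_map,
      List.map_map]
    rw [ih]
    congr 1

lemma beta_le_maxNO (t : Tm S V) (f : S) (ss : List (Tm S V)) :
    (ss.map (maxNO t)).sum ≤ maxNO t (app f ss) := by
  classical
  set d := app f ss with hd
  have hach : ∀ u : Tm S V, ∃ B, NOSet t u B ∧ B.card = maxNO t u :=
    fun u => (maxNO_spec t u).1
  choose Ach hAch1 hAch2 using hach
  set sj : ℕ → Tm S V := fun j => (ss[j]?).getD d with hsj
  have hsome : ∀ j < ss.length, ss[j]? = some (sj j) := by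
    intro j hj
    simp [hsj, List.getElem?_eq_getElem hj]
  set A : Finset (List ℕ) :=
    (Finset.range ss.length).biUnion (fun j => (Ach (sj j)).image (j :: ·)) with hA
  have hmemA : ∀ π, π ∈ A ↔ ∃ j < ss.length, ∃ τ ∈ Ach (sj j), π = j :: τ := by
    intro π
    simp only [hA, Finset.mem_biUnion, Finset.mem_range, Finset.mem_image]
    constructor
    · rintro ⟨j, hj, τ, hτ, rfl⟩; exact ⟨j, hj, τ, hτ, rfl⟩
    · rintro ⟨j, hj, τ, hτ, rfl⟩; exact ⟨j, hj, τ, hτ, rfl⟩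
  have hNO : NOSet t d A := by
    constructor
    · intro π hπ
      rw [hmemA] at hπ
      obtain ⟨j, hj, τ, hτ, rfl⟩ := hπ
      obtain ⟨σ, hσ⟩ := (hAch1 (sj j)).1 τ hτ
      exact ⟨σ, by rw [hd, subtermAt_cons, hsome j hj]; exact hσ⟩
    · intro π₁ h₁ π₂ h₂ hne hov
      rw [hmemA] at h₁ h₂
      obtain ⟨j₁, hj₁, τ₁, hτ₁, rfl⟩ := h₁
      obtain ⟨j₂, hj₂, τ₂, hτ₂, rfl⟩ := h₂
      have hj : j₁ = j₂ := by
        obtain ⟨μ, hμ, h | h⟩ := hov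
        · have := congrArg List.head? h; simp at this; omega
        · have := congrArg List.head? h; simp at this; omega
      subst hj
      have hτne : τ₁ ≠ τ₂ := fun h => hne (by rw [h])
      rw [show (j₁ :: τ₁ : List ℕ) = [j₁] ++ τ₁ from rfl,
        show (j₁ :: τ₂ : List ℕ) = [j₁] ++ τ₂ from rfl, overlap_shift] at hov
      exact (hAch1 (sj j₁)).2 τ₁ hτ₁ τ₂ hτ₂ hτne hov
  have hcard : A.card = (ss.map (maxNO t)).sum := by
    rw [hA, Finset.card_biUnion]
    · rw [list_sum_map_eq ss (maxNO t) d]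
      apply Finset.sum_congr rfl
      intro j hj
      have hinj : Function.Injective (fun τ : List ℕ => j :: τ) :=
        fun a b h => by simpa using h
      rw [Finset.card_image_of_injective _ hinj, hAch2]
    · intro j₁ _ j₂ _ hne
      simp only [Finset.disjoint_left, Finset.mem_image]
      rintro π ⟨τ₁, _, rfl⟩ ⟨τ₂, _, h⟩
      have := congrArg List.head? h
      simp at this
      omega
  rw [← hcard]
  exact (maxNO_spec t d).2 A hNO

lemma gamma_le_maxNO (t : Tm S V) (ht : ∀ x : V, t ≠ var x) (s : Tm S V)
    (hm : Matches t s []) :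
    ((varPositions t).map fun ρ => maxNO t ((subtermAt s ρ).getD s)).sum + 1 ≤ maxNO t s := by
  classical
  obtain ⟨σ0, hσ0⟩ := hm
  simp only [subtermAt, Option.some.injEq] at hσ0
  have hach : ∀ u : Tm S V, ∃ B, NOSet t u B ∧ B.card = maxNO t u :=
    fun u => (maxNO_spec t u).1
  choose Ach hAch1 hAch2 using hach
  set sub : List ℕ → Tm S V := fun ρ => (subtermAt s ρ).getD s with hsub
  have hvp : ∀ ρ ∈ varPositions t, ∃ x : V, subtermAt t ρ = some (var x) :=
    fun ρ h => mem_varPositions.mp h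
  have hsubρ : ∀ ρ ∈ varPositions t, subtermAt s ρ = some (sub ρ) := by
    intro ρ hρ
    obtain ⟨x, hx⟩ := hvp ρ hρ
    have := subtermAt_subst (σ := σ0) hx
    rw [← hσ0] at this
    simp [hsub, this]
  have hvne : ∀ ρ ∈ varPositions t, ρ ≠ [] := by
    intro ρ hρ h
    subst h
    obtain ⟨x, hx⟩ := hvp [] hρ
    simp only [subtermAt, Option.some.injEq] at hx
    exact ht x hx
  set B : Finset (List ℕ) :=
    (varPositions t).toFinset.biUnion (fun ρ => (Ach (sub ρ)).image (ρ ++ ·)) with hB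
  have hmemB : ∀ π, π ∈ B ↔ ∃ ρ ∈ varPositions t, ∃ τ ∈ Ach (sub ρ), π = ρ ++ τ := by
    intro π
    simp only [hB, Finset.mem_biUnion, List.mem_toFinset, Finset.mem_image]
    constructor
    · rintro ⟨ρ, hρ, τ, hτ, rfl⟩; exact ⟨ρ, hρ, τ, hτ, rfl⟩
    · rintro ⟨ρ, hρ, τ, hτ, rfl⟩; exact ⟨ρ, hρ, τ, hτ, rfl⟩
  have hnil : ([] : List ℕ) ∉ B := by
    rw [hmemB]
    rintro ⟨ρ, hρ, τ, hτ, h⟩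
    exact hvne ρ hρ (List.append_eq_nil_iff.mp h.symm).1
  have hρeq : ∀ ρ₁ ∈ varPositions t, ∀ ρ₂ ∈ varPositions t, ∀ τ₁ τ₂ : List ℕ,
      ρ₁ ++ τ₁ = ρ₂ ++ τ₂ → ρ₁ = ρ₂ := by
    intro ρ₁ h₁ ρ₂ h₂ τ₁ τ₂ h
    obtain ⟨x, hx⟩ := hvp ρ₁ h₁
    obtain ⟨y, hy⟩ := hvp ρ₂ h₂
    have hp1 : ρ₁ <+: ρ₁ ++ τ₁ := ⟨τ₁, rfl⟩
    have hp2 : ρ₂ <+: ρ₁ ++ τ₁ := ⟨τ₂, h.symm⟩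
    rcases List.prefix_or_prefix_of_prefix hp1 hp2 with hp | hp
    · exact varpos_incomp hx hy hp
    · exact (varpos_incomp hy hx hp).symm
  have hNO : NOSet t s (insert [] B) := by
    constructor
    · intro π hπ
      rcases Finset.mem_insert.mp hπ with rfl | hπ
      · exact ⟨σ0, by simp [subtermAt, hσ0]⟩
      · rw [hmemB] at hπ
        obtain ⟨ρ, hρ, τ, hτ, rfl⟩ := hπ
        obtain ⟨σ, hσ⟩ := (hAch1 (sub ρ)).1 τ hτ
        exact ⟨σ, by rw [subtermAt_append, hsubρ ρ hρ]; exact hσ⟩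
    · have key : ∀ π ∈ B, ¬ Overlap t [] π ∧ ¬ Overlap t π [] := by
        intro π hπ
        rw [hmemB] at hπ
        obtain ⟨ρ, hρ, τ, hτ, rfl⟩ := hπ
        obtain ⟨x, hx⟩ := hvp ρ hρ
        constructor
        · rintro ⟨μ, hμ, h | h⟩
          · have : ρ = [] := by
              have := h.symm
              simp only [List.append_assoc, List.append_eq_nil_iff] at this
              exact this.1
            exact hvne ρ hρ this
          · exact not_isAppPos_of_varpos hx τ (by rw [List.nil_append] at h; rwa [← h] at hμ)
        · rintro ⟨μ, hμ, h | h⟩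
          · exact not_isAppPos_of_varpos hx τ (by rw [List.nil_append] at h; rwa [← h] at hμ)
          · have : ρ = [] := by
              have := h.symm
              simp only [List.append_assoc, List.append_eq_nil_iff] at this
              exact this.1
            exact hvne ρ hρ this
      intro π₁ h₁ π₂ h₂ hne hov
      rcases Finset.mem_insert.mp h₁ with rfl | h₁
      · rcases Finset.mem_insert.mp h₂ with rfl | h₂
        · exact hne rfl
        · exact (key π₂ h₂).1 hov
      · rcases Finset.mem_insert.mp h₂ with rfl | h₂
        · exact (key π₁ h₁).2 hov
        · rw [hmemB] at h₁ h₂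
          obtain ⟨ρ₁, hρ₁, τ₁, hτ₁, rfl⟩ := h₁
          obtain ⟨ρ₂, hρ₂, τ₂, hτ₂, rfl⟩ := h₂
          have hρ : ρ₁ = ρ₂ := by
            obtain ⟨μ, hμ, h | h⟩ := hov
            · rw [List.append_assoc] at h
              exact hρeq ρ₁ hρ₁ ρ₂ hρ₂ _ _ h
            · rw [List.append_assoc] at h
              exact (hρeq ρ₂ hρ₂ ρ₁ hρ₁ _ _ h).symm
          subst hρ
          rw [overlap_shift] at hov
          exact (hAch1 (sub ρ₁)).2 τ₁ hτ₁ τ₂ hτ₂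
            (fun h => hne (by rw [h])) hov
  have hcard : (insert [] B).card =
      ((varPositions t).map fun ρ => maxNO t ((subtermAt s ρ).getD s)).sum + 1 := by
    rw [Finset.card_insert_of_notMem hnil]
    congr 1
    rw [hB, Finset.card_biUnion]
    · rw [← List.sum_toFinset _ (nodup_varPositions t)]
      apply Finset.sum_congr rfl
      intro ρ hρ
      have hinj : Function.Injective (fun τ : List ℕ => ρ ++ τ) :=
        fun a b h => by simpa using h
      rw [Finset.card_image_of_injective _ hinj, hAch2]
    · intro ρ₁ h₁ ρ₂ h₂ hne
      simp only [Finset.mem_coe, List.mem_toFinset] at h₁ h₂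
      simp only [Finset.disjoint_left, Finset.mem_image]
      rintro π ⟨τ₁, _, rfl⟩ ⟨τ₂, _, h⟩
      exact hne (hρeq ρ₁ h₁ ρ₂ h₂ τ₁ τ₂ h.symm)
  rw [← hcard]
  exact (maxNO_spec t s).2 _ hNO

lemma card_le_beta {t : Tm S V} (f : S) (ss : List (Tm S V)) {A : Finset (List ℕ)}
    (hA : NOSet t (app f ss) A) (hnil : ([] : List ℕ) ∉ A) :
    A.card ≤ (ss.map (maxNO t)).sum := by
  classical
  set d := app f ss with hd
  set sj : ℕ → Tm S V := fun j => (ss[j]?).getD d with hsj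
  have hsome : ∀ j < ss.length, ss[j]? = some (sj j) := by
    intro j hj
    simp [hsj, List.getElem?_eq_getElem hj]
  have hhead : ∀ π ∈ A, ∃ j < ss.length, ∃ τ, π = j :: τ := by
    intro π hπ
    obtain ⟨σ, hσ⟩ := hA.1 π hπ
    cases π with
    | nil => exact absurd hπ hnil
    | cons j τ =>
      refine ⟨j, ?_, τ, rfl⟩
      rw [hd, subtermAt_cons] at hσ
      by_contra hj
      rw [List.getElem?_eq_none (by omega)] at hσ
      simp at hσ
  have hcc := card_classes (List.range ss.length) List.nodup_range
    (fun j π => ∃ τ, π = j :: τ) A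
    (by
      intro π hπ
      obtain ⟨j, hj, τ, rfl⟩ := hhead π hπ
      exact ⟨j, List.mem_range.mpr hj, τ, rfl⟩)
    (by
      rintro π hπ j₁ _ j₂ _ ⟨τ₁, rfl⟩ ⟨τ₂, he⟩
      simpa using congrArg List.head? he)
  rw [hcc, list_sum_map_eq ss (maxNO t) d, ← range_list_sum]
  apply List.sum_le_sum
  intro j hj
  rw [List.mem_range] at hj
  set Aj := A.filter (fun π => ∃ τ, π = j :: τ) with hAj
  have hmemj : ∀ π ∈ Aj, ∃ τ, π = j :: τ ∧ π ∈ A := by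
    intro π hπ
    rw [hAj, Finset.mem_filter] at hπ
    obtain ⟨τ, rfl⟩ := hπ.2
    exact ⟨τ, rfl, hπ.1⟩
  have hcardim : Aj.card = (Aj.image List.tail).card := by
    rw [Finset.card_image_of_injOn]
    intro π₁ h₁ π₂ h₂ he
    obtain ⟨τ₁, rfl, _⟩ := hmemj π₁ h₁
    obtain ⟨τ₂, rfl, _⟩ := hmemj π₂ h₂
    simpa using he
  have hNO : NOSet t (sj j) (Aj.image List.tail) := by
    constructor
    · intro τ hτ
      rw [Finset.mem_image] at hτ
      obtain ⟨π, hπ, rfl⟩ := hτ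
      obtain ⟨τ, rfl, hπA⟩ := hmemj π hπ
      obtain ⟨σ, hσ⟩ := hA.1 _ hπA
      rw [hd, subtermAt_cons, hsome j hj] at hσ
      exact ⟨σ, hσ⟩
    · intro τ₁ h₁ τ₂ h₂ hne hov
      rw [Finset.mem_image] at h₁ h₂
      obtain ⟨π₁, hπ₁, rfl⟩ := h₁
      obtain ⟨π₂, hπ₂, rfl⟩ := h₂
      obtain ⟨τ₁, rfl, hπA₁⟩ := hmemj π₁ hπ₁
      obtain ⟨τ₂, rfl, hπA₂⟩ := hmemj π₂ hπ₂
      simp only [List.tail_cons] at hne hov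
      rw [← overlap_shift (t := t) [j]] at hov
      exact hA.2 _ hπA₁ _ hπA₂ (by simpa using hne) hov
  rw [hcardim]
  exact (maxNO_spec t (sj j)).2 _ hNO

lemma card_le_gamma {t : Tm S V} (ht : ∀ x : V, t ≠ var x) {s : Tm S V}
    {A : Finset (List ℕ)} (hA : NOSet t s A) (hnil : ([] : List ℕ) ∈ A) :
    A.card ≤ ((varPositions t).map fun ρ => maxNO t ((subtermAt s ρ).getD s)).sum + 1 := by
  classical
  obtain ⟨σ0, hσ0⟩ := hA.1 [] hnil
  simp only [subtermAt, Option.some.injEq] at hσ0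
  set sub : List ℕ → Tm S V := fun ρ => (subtermAt s ρ).getD s with hsub
  have hsubρ : ∀ ρ ∈ varPositions t, subtermAt s ρ = some (sub ρ) := by
    intro ρ hρ
    obtain ⟨x, hx⟩ := mem_varPositions.mp hρ
    have := subtermAt_subst (σ := σ0) hx
    rw [← hσ0] at this
    simp [hsub, this]
  set A' := A.erase [] with hA'
  have hmemA' : ∀ π ∈ A', π ∈ A ∧ π ≠ [] := by
    intro π hπ
    rw [hA', Finset.mem_erase] at hπ
    exact ⟨hπ.2, hπ.1⟩
  have hclass : ∀ π ∈ A', ∃ ρ ∈ varPositions t, ρ <+: π := by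
    intro π hπ
    obtain ⟨hπA, hπne⟩ := hmemA' π hπ
    obtain ⟨σ, hσ⟩ := hA.1 π hπA
    rw [hσ0] at hσ
    rcases classify σ0 t π _ hσ with hap | ⟨ρ, τ, rfl, x, hx⟩
    · exact absurd ⟨π, hap, Or.inl (by simp)⟩ (hA.2 π hπA [] hnil hπne)
    · exact ⟨ρ, mem_varPositions.mpr ⟨x, hx⟩, τ, rfl⟩
  have huniq : ∀ π ∈ A', ∀ ρ₁ ∈ varPositions t, ∀ ρ₂ ∈ varPositions t,
      ρ₁ <+: π → ρ₂ <+: π → ρ₁ = ρ₂ := by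
    intro π _ ρ₁ h₁ ρ₂ h₂ hp₁ hp₂
    obtain ⟨x, hx⟩ := mem_varPositions.mp h₁
    obtain ⟨y, hy⟩ := mem_varPositions.mp h₂
    rcases List.prefix_or_prefix_of_prefix hp₁ hp₂ with hp | hp
    · exact varpos_incomp hx hy hp
    · exact (varpos_incomp hy hx hp).symm
  have hcc := card_classes (varPositions t) (nodup_varPositions t)
    (fun ρ π => ρ <+: π) A' hclass huniq
  have hcard : A.card = A'.card + 1 := by
    rw [hA']
    exact (Finset.card_erase_add_one hnil).symm
  rw [hcard, hcc]
  apply Nat.add_le_add_right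
  apply List.sum_le_sum
  intro ρ hρ
  set Aρ := A'.filter (fun π => ρ <+: π) with hAρ
  have hmemρ : ∀ π ∈ Aρ, π ∈ A ∧ ρ ++ π.drop ρ.length = π := by
    intro π hπ
    rw [hAρ, Finset.mem_filter] at hπ
    obtain ⟨τ, rfl⟩ := hπ.2
    exact ⟨(hmemA' _ hπ.1).1, by rw [List.drop_left]⟩
  have hcardim : Aρ.card = (Aρ.image (List.drop ρ.length)).card := by
    rw [Finset.card_image_of_injOn]
    intro π₁ h₁ π₂ h₂ he
    rw [← (hmemρ π₁ h₁).2, ← (hmemρ π₂ h₂).2, he]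
  have hNO : NOSet t (sub ρ) (Aρ.image (List.drop ρ.length)) := by
    constructor
    · intro τ hτ
      rw [Finset.mem_image] at hτ
      obtain ⟨π, hπ, rfl⟩ := hτ
      obtain ⟨hπA, hdrop⟩ := hmemρ π hπ
      obtain ⟨σ, hσ⟩ := hA.1 π hπA
      rw [← hdrop, subtermAt_append, hsubρ ρ hρ] at hσ
      exact ⟨σ, hσ⟩
    · intro τ₁ h₁ τ₂ h₂ hne hov
      rw [Finset.mem_image] at h₁ h₂
      obtain ⟨π₁, hπ₁, rfl⟩ := h₁
      obtain ⟨π₂, hπ₂, rfl⟩ := h₂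
      rw [← overlap_shift (t := t) ρ] at hov
      rw [(hmemρ π₁ hπ₁).2, (hmemρ π₂ hπ₂).2] at hov
      apply hA.2 π₁ (hmemρ π₁ hπ₁).1 π₂ (hmemρ π₂ hπ₂).1 _ hov
      intro h
      exact hne (by rw [h])
  rw [hcardim]
  exact (maxNO_spec t (sub ρ)).2 _ hNO

end Tm

/-- The recursion underlying the dynamic programming algorithm for `maxNO`: for
`s = f(s₁,…,s_k)` and `β = Σⱼ maxNO(t, sⱼ)`, if `t` matches `s` at the root then
`maxNO(t,s) = max β (Σ_{π ∈ Pos_V(t)} maxNO(t, s|_π) + 1)`, and otherwise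
`maxNO(t,s) = β`. -/
theorem maxNO_recursion {S V : Type} (t : Tm S V) (ht : ∀ x : V, t ≠ Tm.var x)
    (f : S) (ss : List (Tm S V)) :
    (Tm.Matches t (Tm.app f ss) [] →
      Tm.maxNO t (Tm.app f ss) =
        max ((ss.map (Tm.maxNO t)).sum)
          (((Tm.varPositions t).map fun π =>
              Tm.maxNO t ((Tm.subtermAt (Tm.app f ss) π).getD (Tm.app f ss))).sum
            + 1)) ∧
    (¬ Tm.Matches t (Tm.app f ss) [] →
      Tm.maxNO t (Tm.app f ss) = (ss.map (Tm.maxNO t)).sum) := by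
  constructor
  · intro hm
    apply le_antisymm
    · obtain ⟨A, hA, hAcard⟩ := (Tm.maxNO_spec t (Tm.app f ss)).1
      rw [← hAcard]
      by_cases hnil : ([] : List ℕ) ∈ A
      · exact le_max_of_le_right (Tm.card_le_gamma ht hA hnil)
      · exact le_max_of_le_left (Tm.card_le_beta f ss hA hnil)
    · exact max_le (Tm.beta_le_maxNO t f ss) (Tm.gamma_le_maxNO t ht (Tm.app f ss) hm)
  · intro hm
    apply le_antisymm
    · obtain ⟨A, hA, hAcard⟩ := (Tm.maxNO_spec t (Tm.app f ss)).1
      rw [← hAcard]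
      apply Tm.card_le_beta f ss hA
      intro hnil
      exact hm (hA.1 [] hnil)
    · exact Tm.beta_le_maxNO t f ss
end
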